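/- Let V be a finite-dimensional real normed vector space, G a compact subgroup of the group GL(V) of linear automorphisms of V (with its natural topology), and S ⊆ V a nonempty compact convex set with T(S) = S for all T ∈ G. Suppose G acts transitively on the set of extreme points of S. Then there exists exactly one point μ ∈ S with Tμ = μ for all T ∈ G. -/

import Mathlib

open MeasureTheory Set


/-- A compact group of linear automorphisms of a finite-dimensional real normed space,
preserving a nonempty compact convex set `S` and acting transitively on its extreme points,
has a unique fixed point in `S` (the maximally mixed state). -/
theorem stmt_2 {V : Type*} [NormedAddCommGroup V] [NormedSpace ℝ V] [FiniteDimensional ℝ V]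
    (G : Set (V →L[ℝ] V)) (hGcompact : IsCompact G)
    (hid : ContinuousLinearMap.id ℝ V ∈ G)
    (hcomp : ∀ T ∈ G, ∀ U ∈ G, T.comp U ∈ G)
    (hinv : ∀ T ∈ G, ∃ U ∈ G, T.comp U = ContinuousLinearMap.id ℝ V ∧
      U.comp T = ContinuousLinearMap.id ℝ V)
    (S : Set V) (hS : S.Nonempty) (hScompact : IsCompact S) (hSconv : Convex ℝ S)
    (hGS : ∀ T ∈ G, T '' S = S)
    (htrans : ∀ x ∈ S.extremePoints ℝ, ∀ y ∈ S.extremePoints ℝ, ∃ T ∈ G, T x = y) :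
    ∃! μ, μ ∈ S ∧ ∀ T ∈ G, T μ = μ := by
  classical
  obtain ⟨x₀, hx₀⟩ := hScompact.extremePoints_nonempty hS
  -- Group structure on ↥G
  letI : Mul ↥G := ⟨fun T U => ⟨T.1.comp U.1, hcomp _ T.2 _ U.2⟩⟩
  letI : One ↥G := ⟨⟨ContinuousLinearMap.id ℝ V, hid⟩⟩
  letI : Inv ↥G := ⟨fun T => ⟨(hinv T.1 T.2).choose, (hinv T.1 T.2).choose_spec.1⟩⟩
  letI : Group ↥G :=
    { mul_assoc := fun a b c => Subtype.ext (mul_assoc a.1 b.1 c.1)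
      one_mul := fun a => Subtype.ext (one_mul a.1)
      mul_one := fun a => Subtype.ext (mul_one a.1)
      inv_mul_cancel := fun a => Subtype.ext (hinv a.1 a.2).choose_spec.2.2 }
  haveI : CompactSpace ↥G := isCompact_iff_compactSpace.mp hGcompact
  haveI : ContinuousMul ↥G :=
    ⟨(((continuous_subtype_val.comp continuous_fst).mul
        (continuous_subtype_val.comp continuous_snd))).subtype_mk _⟩
  haveI : ContinuousInv ↥G := by
    let e : ↥G × ↥G ≃ ↥G × ↥G :=
      { toFun := fun p => (p.1, p.1 * p.2)
        invFun := fun p => (p.1, p.1⁻¹ * p.2)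
        left_inv := fun p => by simp
        right_inv := fun p => by simp }
    have hc : Continuous e := continuous_fst.prodMk (continuous_fst.mul continuous_snd)
    let h := hc.homeoOfEquivCompactToT2
    have : (fun a : ↥G => a⁻¹) = Prod.snd ∘ h.symm ∘ fun a : ↥G => (a, (1 : ↥G)) := by
      funext a
      show a⁻¹ = (e.symm (a, 1)).2
      simp [e]
    refine ⟨?_⟩
    rw [this]
    exact continuous_snd.comp (h.symm.continuous.comp
      (continuous_id.prodMk continuous_const))
  haveI : IsTopologicalGroup ↥G := {}
  letI : MeasurableSpace ↥G := borel ↥G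
  haveI : BorelSpace ↥G := ⟨rfl⟩
  haveI : Nonempty ↥G := ⟨1⟩
  let K₀ : TopologicalSpace.PositiveCompacts ↥G :=
    ⟨⟨univ, isCompact_univ⟩, by rw [interior_univ]; exact univ_nonempty⟩
  set μ : Measure ↥G := Measure.haarMeasure K₀ with hμdef
  haveI : IsProbabilityMeasure μ := ⟨Measure.haarMeasure_self⟩
  -- right invariance
  haveI : μ.IsMulRightInvariant := by
    constructor
    intro g
    have hmeas : Measurable (· * g : ↥G → ↥G) := (continuous_mul_right g).measurable
    set ν := Measure.map (· * g) μ with hν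
    haveI : IsProbabilityMeasure ν := Measure.isProbabilityMeasure_map hmeas.aemeasurable
    haveI : ν.IsMulLeftInvariant := by
      constructor
      intro h
      rw [hν, Measure.map_map (continuous_mul_left h).measurable hmeas]
      have : ((h * ·) ∘ (· * g)) = ((· * g) ∘ (h * ·)) := by
        funext x; simp [mul_assoc]
      rw [this, ← Measure.map_map hmeas (continuous_mul_left h).measurable,
        MeasureTheory.map_mul_left_eq_self μ h]
    have hu := Measure.haarMeasure_unique ν K₀
    have h1 : ν ↑K₀ = 1 := by
      show ν univ = 1
      exact measure_univ
    rw [hu, h1, one_smul]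
  -- the averaging map
  have contT : ∀ x : V, Continuous fun T : ↥G => (T : V →L[ℝ] V) x := fun x =>
    (ContinuousLinearMap.apply ℝ V x).continuous.comp continuous_subtype_val
  have intT : ∀ x : V, Integrable (fun T : ↥G => (T : V →L[ℝ] V) x) μ := fun x =>
    (contT x).integrable_of_hasCompactSupport
      (IsCompact.of_isClosed_subset isCompact_univ (isClosed_tsupport _) (subset_univ _))
  set p : V → V := fun x => ∫ T : ↥G, (T : V →L[ℝ] V) x ∂μ with hp
  have hadd : ∀ x y : V, p (x + y) = p x + p y := fun x y => by
    simp only [hp, map_add]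
    exact integral_add (intT x) (intT y)
  have hsmul : ∀ (c : ℝ) (x : V), p (c • x) = c • p x := fun c x => by
    simp only [hp, _root_.map_smul]
    exact integral_smul c _
  let P : V →ₗ[ℝ] V := ⟨⟨p, hadd⟩, hsmul⟩
  have hPcont : Continuous p := P.continuous_of_finiteDimensional
  have hleft : ∀ (U : ↥G) (x : V), (U : V →L[ℝ] V) (p x) = p x := fun U x => by
    have h1 := (U : V →L[ℝ] V).integral_comp_comm (intT x)
    rw [hp, ← h1]
    exact integral_mul_left_eq_self (fun T : ↥G => (T : V →L[ℝ] V) x) U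
  have hright : ∀ (U : ↥G) (x : V), p ((U : V →L[ℝ] V) x) = p x := fun U x => by
    rw [hp]
    exact integral_mul_right_eq_self (fun T : ↥G => (T : V →L[ℝ] V) x) U
  have hconstfix : ∀ ν : V, (∀ T ∈ G, T ν = ν) → p ν = ν := fun ν hν => by
    simp only [hp]
    have h2 : (fun T : ↥G => (T : V →L[ℝ] V) ν) = fun _ => ν := funext fun T => hν T.1 T.2
    rw [h2, integral_const, probReal_univ, one_smul]
  have hμ₀S : p x₀ ∈ S := by
    refine hSconv.integral_mem hScompact.isClosed
      (Filter.Eventually.of_forall fun T => ?_) (intT x₀)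
    have h2 : (T : V →L[ℝ] V) x₀ ∈ (T : V →L[ℝ] V) '' S := ⟨x₀, hx₀.1, rfl⟩
    rwa [hGS _ T.2] at h2
  have hconstS : ∀ y ∈ S, p y = p x₀ := by
    intro y hy
    have hy' : y ∈ closure (convexHull ℝ (S.extremePoints ℝ)) := by
      rw [closure_convexHull_extremePoints hScompact hSconv]; exact hy
    have hsub : closure (convexHull ℝ (S.extremePoints ℝ)) ⊆ P ⁻¹' {p x₀} := by
      refine closure_minimal (convexHull_min ?_
        ((convex_singleton (p x₀)).linear_preimage P))
        (IsClosed.preimage hPcont isClosed_singleton)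
      intro z hz
      obtain ⟨T, hTG, hTz⟩ := htrans x₀ hx₀ z hz
      simp only [Set.mem_preimage, Set.mem_singleton_iff]
      show p z = p x₀
      rw [← hTz]
      exact hright ⟨T, hTG⟩ x₀
    exact hsub hy'
  refine ⟨p x₀, ⟨hμ₀S, fun T hT => hleft ⟨T, hT⟩ x₀⟩, ?_⟩
  rintro ν ⟨hνS, hνinv⟩
  rw [← hconstfix ν hνinv]
  exact hconstS ν hνS
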